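/- Let Γ be a finite connected (multi)graph, and let e₀, e₁, …, e_n be a chain of edges in Γ (for each i = 1, …, n there is a vertex vᵢ of degree exactly 2 adjacent to exactly e_{i−1} and eᵢ). Then for every spanning 2-forest F of Γ (a spanning subgraph with no cycles and exactly two connected components), the complement E(Γ) ∖ E(F) contains at most two of the edges e₀, …, e_n. -/
import Mathlib


/-- A multigraph: a type of vertices `V`, a type of edges `E`, and an incidence map
sending each edge to its unordered pair of endpoints. -/
structure Multigraph (V E : Type*) where
  ends : E → Sym2 V

namespace Multigraph

variable {V E : Type*}

/-- Two vertices are adjacent via an edge of the edge set `S`. -/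
def Adj (G : Multigraph V E) (S : Set E) (a b : V) : Prop :=
  ∃ s ∈ S, G.ends s = s(a, b)

/-- Reachability inside the spanning subgraph with edge set `S`. -/
def Reach (G : Multigraph V E) (S : Set E) : V → V → Prop :=
  Relation.ReflTransGen (G.Adj S)

/-- The spanning subgraph with edge set `S` is connected. -/
def ConnectedOn (G : Multigraph V E) (S : Set E) : Prop :=
  ∀ a b : V, G.Reach S a b

/-- The edge set `S` is acyclic: every edge of `S` is a bridge of `S`. -/
def IsAcyclicSet (G : Multigraph V E) (S : Set E) : Prop :=
  ∀ s ∈ S, ∀ a b : V, G.ends s = s(a, b) → ¬ G.Reach (S \ {s}) a b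

/-- The connected components of the spanning subgraph with edge set `S`: the quotient
of the vertex set by the reachability relation generated by the edges of `S`. -/
def Components (G : Multigraph V E) (S : Set E) : Type _ :=
  Quot (G.Adj S)

/-- `S` is (the edge set of) a spanning 2-forest: acyclic, with exactly two connected
components. -/
def IsSpanningTwoForest (G : Multigraph V E) (S : Set E) : Prop :=
  G.IsAcyclicSet S ∧ Nat.card (G.Components S) = 2

/-- `e 0, …, e n` is a chain of edges with interior vertices `v 1, …, v n`:
for each `i`, the vertex `v i` has degree exactly two, being incident to exactly the
two distinct non-loop edges `e (i-1)` and `e i`. -/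
def IsChain (G : Multigraph V E) {n : ℕ} (e : Fin (n + 1) → E) (v : Fin n → V) : Prop :=
  ∀ i : Fin n,
    e i.castSucc ≠ e i.succ ∧
    ¬ (G.ends (e i.castSucc)).IsDiag ∧
    ¬ (G.ends (e i.succ)).IsDiag ∧
    (∀ s : E, v i ∈ G.ends s ↔ s = e i.castSucc ∨ s = e i.succ)

end Multigraph

namespace Multigraph

section Aux

variable {V E : Type*}

private lemma sym2_exists_pair (p : Sym2 V) : ∃ a b, p = s(a, b) := by
  induction p using Sym2.ind with
  | _ a b => exact ⟨a, b, rfl⟩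

private lemma sym2_other {p : Sym2 V} (hd : ¬ p.IsDiag) {a : V} (ha : a ∈ p) :
    ∃ b, b ∈ p ∧ b ≠ a := by
  obtain ⟨x, y, rfl⟩ := sym2_exists_pair p
  rw [Sym2.mk_isDiag_iff] at hd
  rw [Sym2.mem_iff] at ha
  rcases ha with rfl | rfl
  · exact ⟨y, Sym2.mem_mk_right _ _, fun h => hd h.symm⟩
  · exact ⟨x, Sym2.mem_mk_left _ _, hd⟩

private lemma sym2_pin {p : Sym2 V} {x y z : V}
    (hx : x ∈ p) (hy : y ∈ p) (hz : z ∈ p) (hxy : x ≠ y) : z = x ∨ z = y := by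
  obtain ⟨a, b, rfl⟩ := sym2_exists_pair p
  rw [Sym2.mem_iff] at hx hy hz
  rcases hx with rfl | rfl <;> rcases hy with rfl | rfl <;> rcases hz with rfl | rfl <;> tauto

variable {G : Multigraph V E} {F : Set E}

private lemma adj_symm {a b : V} (h : G.Adj F a b) : G.Adj F b a := by
  obtain ⟨s, hs, hends⟩ := h
  exact ⟨s, hs, by rw [hends, Sym2.eq_swap]⟩

private lemma reach_symm {a b : V} (h : G.Reach F a b) : G.Reach F b a := by
  induction h with
  | refl => exact Relation.ReflTransGen.refl
  | tail _ h ih => exact Relation.ReflTransGen.head (adj_symm h) ih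

private lemma reach_of_quot_eq {a b : V}
    (h : Quot.mk (G.Adj F) a = Quot.mk (G.Adj F) b) : G.Reach F a b := by
  have h' := Quot.eq.mp h
  clear h
  induction h' with
  | rel x y h => exact Relation.ReflTransGen.single h
  | refl x => exact Relation.ReflTransGen.refl
  | symm x y h ih => exact reach_symm ih
  | trans x y z h1 h2 ih1 ih2 => exact ih1.trans ih2

private lemma reach_mem {A : Set V} (hA : ∀ x ∈ A, ∀ y, G.Adj F x y → y ∈ A)
    {a b : V} (ha : a ∈ A) (h : G.Reach F a b) : b ∈ A := by
  induction h with
  | refl => exact ha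
  | tail _ h ih => exact hA _ ih _ h

/-- Chain condition for `ℕ`-indexed sequences: edges `e 0, …, e L` with interior
pivot vertices `v 0, …, v (L-1)`. -/
private def Ch (G : Multigraph V E) (e : ℕ → E) (v : ℕ → V) (L : ℕ) : Prop :=
  ∀ i, i < L → e i ≠ e (i+1) ∧ ¬ (G.ends (e i)).IsDiag ∧ ¬ (G.ends (e (i+1))).IsDiag ∧
    (∀ s : E, v i ∈ G.ends s ↔ s = e i ∨ s = e (i+1))

private lemma main_nat [Fintype E] (G : Multigraph V E) (F : Set E)
    (hcard : Nat.card (G.Components F) = 2) :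
    ∀ L (e : ℕ → E) (v : ℕ → V), Ch G e v L →
      {s : E | (∃ i, i ≤ L ∧ e i = s) ∧ s ∉ F}.ncard ≤ 2 := by
  intro L
  induction L using Nat.strong_induction_on with
  | _ L IH =>
  intro e v hc
  -- generic reduction to a shorter chain covering all missing values
  have reduce : ∀ L' (e' : ℕ → E) (v' : ℕ → V), L' < L → Ch G e' v' L' →
      (∀ i, i ≤ L → e i ∉ F → ∃ i', i' ≤ L' ∧ e' i' = e i) →
      {s : E | (∃ i, i ≤ L ∧ e i = s) ∧ s ∉ F}.ncard ≤ 2 := by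
    intro L' e' v' hL hc' hmap
    refine le_trans (Set.ncard_le_ncard ?_ (Set.toFinite _)) (IH L' hL e' v' hc')
    rintro s ⟨⟨i, hiL, rfl⟩, hsF⟩
    obtain ⟨i', hi', he'⟩ := hmap i hiL hsF
    exact ⟨⟨i', hi', he'⟩, hsF⟩
  rcases Nat.eq_zero_or_pos L with rfl | hL1
  · -- length-one chains
    have hsub : {s : E | (∃ i, i ≤ 0 ∧ e i = s) ∧ s ∉ F} ⊆ {e 0} := by
      rintro s ⟨⟨i, hi, rfl⟩, -⟩
      interval_cases i
      exact rfl
    calc {s : E | (∃ i, i ≤ 0 ∧ e i = s) ∧ s ∉ F}.ncard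
        ≤ ({e 0} : Set E).ncard := Set.ncard_le_ncard hsub (Set.toFinite _)
      _ ≤ 2 := by rw [Set.ncard_singleton]; omega
  -- basic consequences of the chain condition
  have hv : ∀ i, i < L → ∀ s : E, v i ∈ G.ends s ↔ s = e i ∨ s = e (i+1) :=
    fun i hi => (hc i hi).2.2.2
  have hne : ∀ i, i < L → e i ≠ e (i+1) := fun i hi => (hc i hi).1
  have hnd : ∀ i, i ≤ L → ¬ (G.ends (e i)).IsDiag := by
    intro i hi
    rcases Nat.lt_or_ge i L with h | h
    · exact (hc i h).2.1
    · have hiL : i = L := le_antisymm hi h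
      have h1 : L - 1 < L := by omega
      have h2 := (hc (L-1) h1).2.2.1
      have hEq : L - 1 + 1 = L := by omega
      rw [hEq] at h2
      rwa [hiL]
  have hpiv1 : ∀ i, i < L → v i ∈ G.ends (e i) :=
    fun i hi => ((hv i hi) (e i)).mpr (Or.inl rfl)
  have hpiv2 : ∀ i, i < L → v i ∈ G.ends (e (i+1)) :=
    fun i hi => ((hv i hi) (e (i+1))).mpr (Or.inr rfl)
  have tip : ∀ r, r + 2 ≤ L → v r = v (r+1) → e (r+2) = e r := by
    intro r h2 hb
    have h1 : v (r+1) ∈ G.ends (e r) := by rw [← hb]; exact hpiv1 r (by omega)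
    rcases (hv (r+1) (by omega) (e r)).mp h1 with h | h
    · exact absurd h (hne r (by omega))
    · exact h.symm
  by_cases hbounce : ∃ r, r + 2 ≤ L ∧ v r = v (r+1)
  · by_cases hA : ∃ r, r + 2 ≤ L ∧ v r = v (r+1) ∧
        (e (r+1) ∈ F ∨ ∃ m, m ≤ L ∧ m ≠ r+1 ∧ e m = e (r+1))
    · -- CASE A : splice out the bounce
      obtain ⟨r, hr2, hrb, hrok⟩ := hA
      have her : e (r+2) = e r := tip r hr2 hrb
      set e' : ℕ → E := fun i => if i ≤ r then e i else e (i+2) with he'def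
      set v' : ℕ → V := fun i => if i < r then v i else v (i+2) with hv'def
      have hc' : Ch G e' v' (L - 2) := by
        intro i hi
        rcases Nat.lt_trichotomy i r with h | h | h
        · have h1 : e' i = e i := by
            simp only [he'def]; rw [if_pos (by omega : i ≤ r)]
          have h2 : e' (i+1) = e (i+1) := by
            simp only [he'def]; rw [if_pos (by omega : i + 1 ≤ r)]
          have h3 : v' i = v i := by
            simp only [hv'def]; rw [if_pos (by omega : i < r)]
          rw [h1, h2, h3]
          exact hc i (by omega)
        · subst h
          have h1 : e' i = e i := by
            simp only [he'def]; rw [if_pos (le_refl i)]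
          have h2 : e' (i+1) = e (i+3) := by
            simp only [he'def]
            rw [if_neg (by omega : ¬ i + 1 ≤ i)]
          have h3 : v' i = v (i+2) := by
            simp only [hv'def]; rw [if_neg (by omega : ¬ i < i)]
          rw [h1, h2, h3]
          have hcc := hc (i+2) (by omega)
          refine ⟨?_, (hc i (by omega)).2.1, ?_, ?_⟩
          · rw [← her]
            have := hcc.1
            have hE : i + 2 + 1 = i + 3 := by omega
            rwa [hE] at this
          · have := hcc.2.2.1
            have hE : i + 2 + 1 = i + 3 := by omega
            rwa [hE] at this
          · intro s
            have := hcc.2.2.2 s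
            have hE : i + 2 + 1 = i + 3 := by omega
            rw [hE] at this
            rw [this, her]
        · have h1 : e' i = e (i+2) := by
            simp only [he'def]; rw [if_neg (by omega : ¬ i ≤ r)]
          have h2 : e' (i+1) = e (i+3) := by
            simp only [he'def]; rw [if_neg (by omega : ¬ i + 1 ≤ r)]
          have h3 : v' i = v (i+2) := by
            simp only [hv'def]; rw [if_neg (by omega : ¬ i < r)]
          rw [h1, h2, h3]
          have hcc := hc (i+2) (by omega)
          have hE : i + 2 + 1 = i + 3 := by omega
          rw [hE] at hcc
          exact hcc
      have hmapgen : ∀ i, i ≤ L → i ≠ r + 1 → ∃ i', i' ≤ L - 2 ∧ e' i' = e i := by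
        intro i hiL hir
        rcases le_or_gt i r with h | h
        · refine ⟨i, by omega, ?_⟩
          simp only [he'def]; rw [if_pos h]
        · rcases Nat.eq_or_lt_of_le h with h' | h'
          · omega
          · rcases Nat.eq_or_lt_of_le h' with h'' | h''
            · -- i = r + 2
              refine ⟨r, by omega, ?_⟩
              have hr' : e' r = e r := by
                simp only [he'def]; rw [if_pos (le_refl r)]
              rw [hr', ← her]
              congr 1 <;> omega
            · -- i ≥ r + 3
              refine ⟨i - 2, by omega, ?_⟩
              have hi2 : e' (i-2) = e (i-2+2) := by
                simp only [he'def]; rw [if_neg (by omega : ¬ i - 2 ≤ r)]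
              rw [hi2]
              congr 1 <;> omega
      refine reduce (L-2) e' v' (by omega) hc' ?_
      intro i hiL hiF
      rcases eq_or_ne i (r+1) with rfl | hir
      · rcases hrok with h | ⟨m, hmL, hmr, hme⟩
        · exact absurd h hiF
        · obtain ⟨i', hi', he'⟩ := hmapgen m hmL hmr
          exact ⟨i', hi', by rw [he', hme]⟩
      · exact hmapgen i hiL hir
    · -- CASE B : all bounces have unique tips not in F; mirror symmetry
      obtain ⟨j, hj2, hjb⟩ := hbounce
      push_neg at hA
      have huniq : ∀ r, r + 2 ≤ L → v r = v (r+1) →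
          ∀ m, m ≤ L → m ≠ r+1 → e m ≠ e (r+1) := by
        intro r h1 h2 m hm1 hm2 hme
        rcases hA r h1 h2 with hAr
        exact hAr.2 m hm1 hm2 hme
      have mirror : ∀ t, 1 ≤ t → t ≤ j + 1 → j + 1 + t ≤ L →
          e (j+1+t) = e (j+1-t) ∧ v (j+t) = v (j+1-t) := by
        intro t
        induction t with
        | zero => omega
        | succ k ihk =>
          intro h1 h2 h3
          rcases Nat.eq_zero_or_pos k with rfl | hk
          · constructor
            · rw [show j + 1 + 1 = j + 2 from by omega, show j + 1 - 1 = j from by omega]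
              exact tip j hj2 hjb
            · rw [show j + 1 - 1 = j from by omega]
              exact hjb.symm
          · obtain ⟨hEk, hVk⟩ := ihk hk (by omega) (by omega)
            have hb1 : 1 ≤ j + 1 - k := by omega
            -- memberships in ends (e (j+1+k))
            have mα : v (j+k) ∈ G.ends (e (j+1+k)) := by
              rw [show j + 1 + k = j + k + 1 from by omega]
              exact hpiv2 (j+k) (by omega)
            have mx : v (j+k+1) ∈ G.ends (e (j+1+k)) := by
              rw [show j + 1 + k = j + k + 1 from by omega]
              exact hpiv1 (j+k+1) (by omega)
            have my : v (j+1-k-1) ∈ G.ends (e (j+1+k)) := by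
              have := hpiv2 (j+1-k-1) (by omega)
              rw [show j + 1 - k - 1 + 1 = j + 1 - k from by omega] at this
              rw [hEk]
              exact this
            have hxa : v (j+k+1) ≠ v (j+k) := by
              intro hcon
              have hbk : v (j+k) = v (j+k+1) := hcon.symm
              exact huniq (j+k) (by omega) hbk (j+1-k) (by omega) (by omega)
                (by rw [← hEk]; congr 1; omega)
            have hya : v (j+1-k-1) ≠ v (j+k) := by
              intro hcon
              have hbk : v (j+1-k-1) = v (j+1-k-1+1) := by
                rw [show j + 1 - k - 1 + 1 = j + 1 - k from by omega, ← hVk]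
                exact hcon
              exact huniq (j+1-k-1) (by omega) hbk (j+1+k)
                (by omega) (by omega)
                (by rw [hEk]; congr 1; omega)
            have hpin := sym2_pin mx mα my hxa
            have hyx : v (j+1-k-1) = v (j+k+1) := by
              rcases hpin with h | h
              · exact h
              · exact absurd h hya
            constructor
            · -- e (j+1+(k+1)) = e (j+1-(k+1))
              have hm1 : v (j+k+1) ∈ G.ends (e (j+k+2)) := by
                have := hpiv2 (j+k+1) (by omega)
                rwa [show j + k + 1 + 1 = j + k + 2 from by omega] at this
              have hm2 : v (j+1-k-1) ∈ G.ends (e (j+k+2)) := by rwa [hyx]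
              have hchar := (hv (j+1-k-1) (by omega) (e (j+k+2))).mp hm2
              rw [show j + 1 - k - 1 + 1 = j + 1 - k from by omega] at hchar
              rcases hchar with h | h
              · rw [show j + 1 + (k+1) = j + k + 2 from by omega,
                    show j + 1 - (k+1) = j + 1 - k - 1 from by omega]
                exact h
              · exfalso
                rw [← hEk] at h
                have := hne (j+1+k) (by omega)
                rw [show j + 1 + k + 1 = j + k + 2 from by omega] at this
                exact this h.symm
            · rw [show j + (k+1) = j + k + 1 from by omega,
                  show j + 1 - (k+1) = j + 1 - k - 1 from by omega]
              exact hyx.symm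
      by_cases hsize : L ≤ 2*j + 2
      · -- reduce to the prefix e 0 .. e (j+1)
        refine reduce (j+1) e v (by omega) (fun i hi => hc i (by omega)) ?_
        intro i hiL hiF
        rcases le_or_gt i (j+1) with h | h
        · exact ⟨i, h, rfl⟩
        · have ht1 : 1 ≤ i - (j+1) := by omega
          have ht2 : i - (j+1) ≤ j + 1 := by omega
          have ht3 : j + 1 + (i - (j+1)) ≤ L := by omega
          obtain ⟨hE, -⟩ := mirror (i - (j+1)) ht1 ht2 ht3
          rw [show j + 1 + (i - (j+1)) = i from by omega] at hE
          exact ⟨j + 1 - (i - (j+1)), by omega, hE.symm⟩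
      · -- reduce to the suffix e (j+1) .. e L
        set e' : ℕ → E := fun i => e (j+1+i) with he'def
        set v' : ℕ → V := fun i => v (j+1+i) with hv'def
        have hc' : Ch G e' v' (L - (j+1)) := by
          intro i hi
          have hcc := hc (j+1+i) (by omega)
          rw [show j + 1 + i + 1 = j + 1 + (i+1) from by omega] at hcc
          exact hcc
        refine reduce (L - (j+1)) e' v' (by omega) hc' ?_
        intro i hiL hiF
        rcases le_or_gt (j+1) i with h | h
        · refine ⟨i - (j+1), by omega, ?_⟩
          simp only [he'def]
          congr 1
          omega
        · -- i ≤ j : use the mirror image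
          have ht1 : 1 ≤ j + 1 - i := by omega
          have ht2 : j + 1 - i ≤ j + 1 := by omega
          have ht3 : j + 1 + (j + 1 - i) ≤ L := by omega
          obtain ⟨hE, -⟩ := mirror (j+1-i) ht1 ht2 ht3
          refine ⟨j + 1 - i, by omega, ?_⟩
          simp only [he'def]
          rw [hE]
          congr 1
          omega
  · -- no bounce
    push_neg at hbounce
    by_cases hinj : ∀ i k, i ≤ L → k ≤ L → e i = e k → i = k
    · -- CASE D : injective chain, main trapping argument
      by_contra hcon
      push_neg at hcon
      have h3 : 3 ≤ {s : E | (∃ i, i ≤ L ∧ e i = s) ∧ s ∉ F}.ncard := by omega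
      -- positions of missing edges
      set P : Set ℕ := {i | i ≤ L ∧ e i ∉ F} with hPdef
      have hPim : {s : E | (∃ i, i ≤ L ∧ e i = s) ∧ s ∉ F} = e '' P := by
        ext s
        constructor
        · rintro ⟨⟨i, hiL, rfl⟩, hsF⟩
          exact ⟨i, ⟨hiL, hsF⟩, rfl⟩
        · rintro ⟨i, ⟨hiL, hiF⟩, rfl⟩
          exact ⟨⟨i, hiL, rfl⟩, hiF⟩
      have hPinj : Set.InjOn e P := fun a ha b hb hab => hinj a b ha.1 hb.1 hab
      have h3P : 3 ≤ P.ncard := by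
        rw [hPim, Set.ncard_image_of_injOn hPinj] at h3
        exact h3
      -- extract three increasing positions
      have hPne : P.Nonempty := by
        rcases Set.eq_empty_or_nonempty P with h | h
        · rw [h, Set.ncard_empty] at h3P; omega
        · exact h
      set p₁ := sInf P with hp1def
      have hp₁ : p₁ ∈ P := Nat.sInf_mem hPne
      set S₂ : Set ℕ := {i | i ∈ P ∧ p₁ < i} with hS2def
      have hS₂ne : S₂.Nonempty := by
        by_contra hcon2
        rw [Set.not_nonempty_iff_eq_empty] at hcon2
        have hsub : P ⊆ {p₁} := by
          intro x hx
          have h1 : p₁ ≤ x := Nat.sInf_le hx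
          have h2 : ¬ p₁ < x := fun h =>
            Set.eq_empty_iff_forall_notMem.mp hcon2 x ⟨hx, h⟩
          simp only [Set.mem_singleton_iff]
          omega
        have := Set.ncard_le_ncard hsub (Set.toFinite _)
        rw [Set.ncard_singleton] at this
        omega
      set p₂ := sInf S₂ with hp2def
      have hp₂S : p₂ ∈ S₂ := Nat.sInf_mem hS₂ne
      have hp₂ : p₂ ∈ P := hp₂S.1
      have hp12 : p₁ < p₂ := hp₂S.2
      set S₃ : Set ℕ := {i | i ∈ P ∧ p₂ < i} with hS3def
      have hS₃ne : S₃.Nonempty := by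
        by_contra hcon3
        rw [Set.not_nonempty_iff_eq_empty] at hcon3
        have hsub : P ⊆ {p₁, p₂} := by
          intro x hx
          have h1 : p₁ ≤ x := Nat.sInf_le hx
          have h2 : ¬ p₂ < x := fun h =>
            Set.eq_empty_iff_forall_notMem.mp hcon3 x ⟨hx, h⟩
          rcases Nat.eq_or_lt_of_le h1 with h | h
          · simp [← h]
          · have : p₂ ≤ x := Nat.sInf_le ⟨hx, h⟩
            have hx2 : x = p₂ := by omega
            simp [hx2]
        have hle := Set.ncard_le_ncard hsub (Set.toFinite _)
        have : ({p₁, p₂} : Set ℕ).ncard ≤ 2 := by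
          apply le_trans (Set.ncard_insert_le _ _)
          rw [Set.ncard_singleton]
        omega
      set p₃ := sInf S₃ with hp3def
      have hp₃S : p₃ ∈ S₃ := Nat.sInf_mem hS₃ne
      have hp₃ : p₃ ∈ P := hp₃S.1
      have hp23 : p₂ < p₃ := hp₃S.2
      have hp₃L : p₃ ≤ L := hp₃.1
      have hp₁F : e p₁ ∉ F := hp₁.2
      have hp₂F : e p₂ ∉ F := hp₂.2
      have hp₃F : e p₃ ∉ F := hp₃.2
      -- injectivity of pivots
      have vinj : ∀ a b, a + 1 ≤ L → b + 1 ≤ L → v a = v b → a = b := by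
        intro a b ha hb hvab
        have h1 : v b ∈ G.ends (e a) := by rw [← hvab]; exact hpiv1 a (by omega)
        have h2 : v b ∈ G.ends (e (a+1)) := by rw [← hvab]; exact hpiv2 a (by omega)
        have c1 := (hv b (by omega) (e a)).mp h1
        have c2 := (hv b (by omega) (e (a+1))).mp h2
        have d1 : a = b ∨ a = b + 1 := by
          rcases c1 with h | h
          · exact Or.inl (hinj a b (by omega) (by omega) h)
          · exact Or.inr (hinj a (b+1) (by omega) (by omega) h)
        have d2 : a + 1 = b ∨ a + 1 = b + 1 := by
          rcases c2 with h | h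
          · exact Or.inl (hinj (a+1) b (by omega) (by omega) h)
          · exact Or.inr (hinj (a+1) (b+1) (by omega) (by omega) h)
        omega
      -- trapped segments
      have closed : ∀ p q : ℕ, p < q → q ≤ L → e p ∉ F → e q ∉ F →
          ∀ x ∈ {x | ∃ m, p ≤ m ∧ m < q ∧ x = v m}, ∀ y, G.Adj F x y →
            y ∈ {x | ∃ m, p ≤ m ∧ m < q ∧ x = v m} := by
        rintro p q hpq hqL hpF hqF x ⟨m, hm1, hm2, rfl⟩ y ⟨s, hsF, hends⟩
        have hmL : m < L := by omega
        have hxm : v m ∈ G.ends s := by rw [hends]; exact Sym2.mem_mk_left _ _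
        have hym : y ∈ G.ends s := by rw [hends]; exact Sym2.mem_mk_right _ _
        rcases (hv m hmL s).mp hxm with rfl | rfl
        · -- s = e m ∈ F
          have hmp : p < m := by
            rcases Nat.eq_or_lt_of_le hm1 with h | h
            · exact absurd hsF (by rw [← h]; exact hpF)
            · exact h
          have hm1' : v (m-1) ∈ G.ends (e m) := by
            have := hpiv2 (m-1) (by omega)
            rwa [show m - 1 + 1 = m from by omega] at this
          have hne1 : v (m-1) ≠ v m := by
            intro h
            have := vinj (m-1) m (by omega) (by omega) h
            omega
          have hynd : y ≠ v m := by
            intro h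
            subst h
            exact hnd m (by omega) (by rw [hends]; exact Sym2.mk_isDiag_iff.mpr rfl)
          rcases sym2_pin hm1' (hpiv1 m hmL) hym hne1 with h | h
          · exact ⟨m - 1, by omega, by omega, h⟩
          · exact absurd h hynd
        · -- s = e (m+1) ∈ F
          have hmq : m + 1 < q := by
            rcases Nat.eq_or_lt_of_le (show m + 1 ≤ q from by omega) with h | h
            · exact absurd hsF (by rw [h]; exact hqF)
            · exact h
          have hm1' : v (m+1) ∈ G.ends (e (m+1)) := hpiv1 (m+1) (by omega)
          have hne1 : v (m+1) ≠ v m := by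
            intro h
            have := vinj (m+1) m (by omega) (by omega) h
            omega
          have hynd : y ≠ v m := by
            intro h
            subst h
            exact hnd (m+1) (by omega) (by rw [hends]; exact Sym2.mk_isDiag_iff.mpr rfl)
          rcases sym2_pin hm1' (hpiv2 m hmL) hym hne1 with h | h
          · exact ⟨m + 1, by omega, by omega, h⟩
          · exact absurd h hynd
      set A : Set V := {x | ∃ m, p₁ ≤ m ∧ m < p₂ ∧ x = v m} with hAdef
      set B : Set V := {x | ∃ m, p₂ ≤ m ∧ m < p₃ ∧ x = v m} with hBdef
      have hAcl := closed p₁ p₂ hp12 (by omega) hp₁F hp₂F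
      have hBcl := closed p₂ p₃ hp23 (by omega) hp₂F hp₃F
      have haA : v p₁ ∈ A := ⟨p₁, le_refl _, hp12, rfl⟩
      have hbB : v p₂ ∈ B := ⟨p₂, le_refl _, hp23, rfl⟩
      have hbA : v p₂ ∉ A := by
        rintro ⟨m, hm1, hm2, hm3⟩
        have := vinj p₂ m (by omega) (by omega) hm3
        omega
      obtain ⟨x, hxmem, hxne⟩ := sym2_other (hnd p₁ (by omega)) (hpiv1 p₁ (by omega))
      have hxA : x ∉ A := by
        rintro ⟨m, hm1, hm2, rfl⟩
        have hxm : v m ∈ G.ends (e p₁) := hxmem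
        rcases (hv m (by omega) (e p₁)).mp hxm with h | h
        · have := hinj p₁ m (by omega) (by omega) h
          subst this
          exact hxne rfl
        · have := hinj p₁ (m+1) (by omega) (by omega) h
          omega
      have hxB : x ∉ B := by
        rintro ⟨m, hm1, hm2, rfl⟩
        have hxm : v m ∈ G.ends (e p₁) := hxmem
        rcases (hv m (by omega) (e p₁)).mp hxm with h | h
        · have := hinj p₁ m (by omega) (by omega) h
          omega
        · have := hinj p₁ (m+1) (by omega) (by omega) h
          omega
      have hr1 : ¬ G.Reach F (v p₁) (v p₂) := fun h => hbA (reach_mem hAcl haA h)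
      have hr2 : ¬ G.Reach F (v p₁) x := fun h => hxA (reach_mem hAcl haA h)
      have hr3 : ¬ G.Reach F (v p₂) x := fun h => hxB (reach_mem hBcl hbB h)
      rw [Nat.card_eq_two_iff] at hcard
      obtain ⟨z, w, hzw, huniv⟩ := hcard
      have mem2 : ∀ q : G.Components F, q = z ∨ q = w := by
        intro q
        have : q ∈ ({z, w} : Set (G.Components F)) := by rw [huniv]; trivial
        simpa using this
      have q12 : Quot.mk (G.Adj F) (v p₁) = Quot.mk (G.Adj F) (v p₂) → False :=
        fun h => hr1 (reach_of_quot_eq h)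
      have q13 : Quot.mk (G.Adj F) (v p₁) = Quot.mk (G.Adj F) x → False :=
        fun h => hr2 (reach_of_quot_eq h)
      have q23 : Quot.mk (G.Adj F) (v p₂) = Quot.mk (G.Adj F) x → False :=
        fun h => hr3 (reach_of_quot_eq h)
      rcases mem2 (Quot.mk (G.Adj F) (v p₁)) with h1 | h1 <;>
        rcases mem2 (Quot.mk (G.Adj F) (v p₂)) with h2 | h2 <;>
          rcases mem2 (Quot.mk (G.Adj F) x) with h3 | h3 <;>
            first
              | exact q12 (h1.trans h2.symm)
              | exact q13 (h1.trans h3.symm)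
              | exact q23 (h2.trans h3.symm)
    · -- CASE C : no bounce, non-injective: the chain is periodic
      push_neg at hinj
      obtain ⟨i₀, k₀, hi₀, hk₀, he₀, hik₀⟩ := hinj
      set Gp : Set ℕ := {d | 0 < d ∧ ∃ a, a + d ≤ L ∧ e a = e (a + d)} with hGpdef
      have hGpne : Gp.Nonempty := by
        rcases Nat.lt_or_ge i₀ k₀ with h | h
        · exact ⟨k₀ - i₀, by omega, i₀, by omega, by rw [show i₀ + (k₀ - i₀) = k₀ from by omega]; exact he₀⟩
        · exact ⟨i₀ - k₀, by omega, k₀, by omega, by rw [show k₀ + (i₀ - k₀) = i₀ from by omega]; exact he₀.symm⟩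
      set g := sInf Gp with hgdef
      have hgmem : g ∈ Gp := Nat.sInf_mem hGpne
      obtain ⟨hg0, a₀, ha₀L, hea₀⟩ := hgmem
      have hgle : ∀ d, d ∈ Gp → g ≤ d := fun d hd => Nat.sInf_le hd
      have hg2 : 2 ≤ g := by
        rcases Nat.lt_or_ge g 2 with h | h
        · exfalso
          have hg1 : g = 1 := by omega
          rw [hg1] at hea₀ ha₀L
          exact hne a₀ (by omega) hea₀
        · exact h
      have hgL : g ≤ L := by omega
      -- step lemmas
      have stepup : ∀ a, a + g + 1 ≤ L → e a = e (a+g) → e (a+1) = e (a+g+1) := by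
        intro a haL hae
        have h1 : v (a+g-1) ∈ G.ends (e (a+g)) := by
          have := hpiv2 (a+g-1) (by omega)
          rwa [show a + g - 1 + 1 = a + g from by omega] at this
        have h2 : v (a+g) ∈ G.ends (e (a+g)) := hpiv1 (a+g) (by omega)
        have h12 : v (a+g-1) ≠ v (a+g) := by
          have := hbounce (a+g-1) (by omega)
          rwa [show a + g - 1 + 1 = a + g from by omega] at this
        have h3 : v a ∈ G.ends (e (a+g)) := by rw [← hae]; exact hpiv1 a (by omega)
        rcases sym2_pin h1 h2 h3 h12 with hva | hva
        · exfalso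
          rcases Nat.eq_or_lt_of_le hg2 with hgg | hgg
          · -- g = 2 : bounce at a
            have : v a = v (a+1) := by
              rw [hva]; congr 1; omega
            exact hbounce a (by omega) this
          · -- g ≥ 3 : smaller gap
            have h4 : v (a+g-1) ∈ G.ends (e (a+1)) := by
              rw [← hva]; exact hpiv2 a (by omega)
            rcases (hv (a+g-1) (by omega) (e (a+1))).mp h4 with h | h
            · have : g - 2 ∈ Gp := by
                refine ⟨by omega, a+1, by omega, ?_⟩
                rw [show a + 1 + (g - 2) = a + g - 1 from by omega]
                exact h
              have := hgle _ this
              omega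
            · rw [show a + g - 1 + 1 = a + g from by omega, ← hae] at h
              exact hne a (by omega) h.symm
        · have h4 : v (a+g) ∈ G.ends (e (a+1)) := by
            rw [← hva]; exact hpiv2 a (by omega)
          rcases (hv (a+g) (by omega) (e (a+1))).mp h4 with h | h
          · rw [← hae] at h
            exact absurd h.symm (hne a (by omega))
          · exact h
      have stepdown : ∀ a, 1 ≤ a → a + g ≤ L → e a = e (a+g) → e (a-1) = e (a+g-1) := by
        intro a ha1 haL hae
        have h1 : v (a-1) ∈ G.ends (e a) := by
          have := hpiv2 (a-1) (by omega)
          rwa [show a - 1 + 1 = a from by omega] at this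
        have h2 : v a ∈ G.ends (e a) := hpiv1 a (by omega)
        have h12 : v (a-1) ≠ v a := by
          have := hbounce (a-1) (by omega)
          rwa [show a - 1 + 1 = a from by omega] at this
        have h3 : v (a+g-1) ∈ G.ends (e a) := by
          have := hpiv2 (a+g-1) (by omega)
          rw [show a + g - 1 + 1 = a + g from by omega] at this
          rwa [← hae] at this
        rcases sym2_pin h1 h2 h3 h12 with hva | hva
        · -- v (a+g-1) = v (a-1) : good case
          have h4 : v (a+g-1) ∈ G.ends (e (a-1)) := by
            rw [hva]; exact hpiv1 (a-1) (by omega)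
          rcases (hv (a+g-1) (by omega) (e (a-1))).mp h4 with h | h
          · exact h
          · exfalso
            rw [show a + g - 1 + 1 = a + g from by omega, ← hae] at h
            have := hne (a-1) (by omega)
            rw [show a - 1 + 1 = a from by omega] at this
            exact this h
        · -- v (a+g-1) = v a : impossible
          exfalso
          rcases Nat.eq_or_lt_of_le hg2 with hgg | hgg
          · -- g = 2 : bounce at a
            have hb : v a = v (a+1) := by
              rw [← hva]; congr 1; omega
            exact hbounce a (by omega) hb
          · have h4 : v (a+g-1) ∈ G.ends (e (a+1)) := by
              rw [hva]; exact hpiv2 a (by omega)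
            rcases (hv (a+g-1) (by omega) (e (a+1))).mp h4 with h | h
            · have hgp : g - 2 ∈ Gp := by
                refine ⟨by omega, a+1, by omega, ?_⟩
                rw [show a + 1 + (g - 2) = a + g - 1 from by omega]
                exact h
              have := hgle _ hgp
              omega
            · rw [show a + g - 1 + 1 = a + g from by omega, ← hae] at h
              exact hne a (by omega) h.symm
      -- periodicity
      have up : ∀ d, a₀ + d + g ≤ L → e (a₀ + d) = e (a₀ + d + g) := by
        intro d
        induction d with
        | zero => intro _; simpa using hea₀
        | succ k ihk =>
          intro h
          have ih := ihk (by omega)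
          have hstep := stepup (a₀ + k) (by omega) ih
          calc e (a₀ + (k+1)) = e (a₀ + k + 1) := by congr 1 <;> omega
            _ = e (a₀ + k + g + 1) := hstep
            _ = e (a₀ + (k+1) + g) := by congr 1 <;> omega
      have down : ∀ d, e (a₀ - d) = e (a₀ - d + g) := by
        intro d
        induction d with
        | zero => simpa using hea₀
        | succ k ihk =>
          rcases Nat.lt_or_ge k a₀ with hk | hk
          · have h1 : 1 ≤ a₀ - k := by omega
            have h2 : a₀ - k + g ≤ L := by omega
            have hstep := stepdown (a₀ - k) h1 h2 ihk
            calc e (a₀ - (k+1)) = e (a₀ - k - 1) := by congr 1 <;> omega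
              _ = e (a₀ - k + g - 1) := hstep
              _ = e (a₀ - (k+1) + g) := by congr 1 <;> omega
          · calc e (a₀ - (k+1)) = e (a₀ - k) := by congr 1 <;> omega
              _ = e (a₀ - k + g) := ihk
              _ = e (a₀ - (k+1) + g) := by congr 1 <;> omega
      have per : ∀ m, m + g ≤ L → e m = e (m + g) := by
        intro m hm
        rcases le_or_gt a₀ m with h | h
        · have := up (m - a₀) (by omega)
          rwa [show a₀ + (m - a₀) = m from by omega] at this
        · have := down (a₀ - m)
          rwa [show a₀ - (a₀ - m) = m from by omega] at this
      -- reduce to the window e 0 .. e (g-1)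
      have win : ∀ m, m ≤ L → ∃ i', i' ≤ g - 1 ∧ e i' = e m := by
        intro m
        induction m using Nat.strong_induction_on with
        | _ m ihm =>
        intro hm
        rcases Nat.lt_or_ge m g with h | h
        · exact ⟨m, by omega, rfl⟩
        · obtain ⟨i', hi', hei'⟩ := ihm (m - g) (by omega) (by omega)
          refine ⟨i', hi', ?_⟩
          rw [hei']
          have := per (m - g) (by omega)
          rwa [show m - g + g = m from by omega] at this
      refine reduce (g-1) e v (by omega) (fun i hi => hc i (by omega)) ?_
      intro i hiL _
      exact win i hiL

/-- The key counting lemma, in polished form. -/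
private lemma final_glue [Fintype V] [Fintype E] (G : Multigraph V E)
    {n : ℕ} (e : Fin (n + 1) → E) (v : Fin n → V) (hchain : G.IsChain e v)
    (F : Set E) (hF : G.IsSpanningTwoForest F) :
    Set.ncard {s : E | (∃ i, e i = s) ∧ s ∉ F} ≤ 2 := by
  obtain ⟨-, hcard⟩ := hF
  cases n with
  | zero =>
    have hsub : {s : E | (∃ i, e i = s) ∧ s ∉ F} ⊆ {e 0} := by
      rintro s ⟨⟨i, rfl⟩, -⟩
      have hlt := i.isLt
      have h0 : i = 0 := by
        apply Fin.ext
        simp only [Fin.val_zero]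
        omega
      rw [h0]
      rfl
    calc {s : E | (∃ i, e i = s) ∧ s ∉ F}.ncard
        ≤ ({e 0} : Set E).ncard := Set.ncard_le_ncard hsub (Set.toFinite _)
      _ ≤ 2 := by rw [Set.ncard_singleton]; omega
  | succ m =>
    set eN : ℕ → E := fun i => e ⟨min i (m+1), by omega⟩ with hedef
    set vN : ℕ → V := fun i => v ⟨min i m, by omega⟩ with hvdef
    have hch : Ch G eN vN (m+1) := by
      intro i hi
      have hcc := hchain ⟨i, hi⟩
      have h1 : eN i = e (Fin.castSucc ⟨i, hi⟩) := by
        simp only [hedef]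
        congr 1
        apply Fin.ext
        simp [Fin.castSucc]
        omega
      have h2 : eN (i+1) = e (Fin.succ ⟨i, hi⟩) := by
        simp only [hedef]
        congr 1
        apply Fin.ext
        simp [Fin.succ]
        omega
      have h3 : vN i = v ⟨i, hi⟩ := by
        simp only [hvdef]
        congr 1
        apply Fin.ext
        simp
        omega
      rw [h1, h2, h3]
      exact hcc
    have hseteq : {s : E | (∃ i, e i = s) ∧ s ∉ F}
        = {s : E | (∃ i, i ≤ m + 1 ∧ eN i = s) ∧ s ∉ F} := by
      ext s
      constructor
      · rintro ⟨⟨i, rfl⟩, hsF⟩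
        refine ⟨⟨i.val, by omega, ?_⟩, hsF⟩
        simp only [hedef]
        congr 1
        apply Fin.ext
        simp
        omega
      · rintro ⟨⟨i, hiL, rfl⟩, hsF⟩
        refine ⟨⟨⟨i, by omega⟩, ?_⟩, hsF⟩
        simp only [hedef]
        congr 1
        apply Fin.ext
        simp
        omega
    rw [hseteq]
    exact main_nat G F hcard (m+1) eN vN hch

end Aux

end Multigraph

/-- **At most two chain edges lie outside a spanning 2-forest.** If `Γ` is a finite
connected multigraph and `e₀, …, e_n` is a chain of edges of `Γ`, then for every
spanning 2-forest `F` of `Γ` (a spanning subgraph with no cycles and exactly two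
connected components) the complement `E(Γ) ∖ E(F)` contains at most two of the edges
`e₀, …, e_n`. -/
theorem Multigraph.chain_edges_not_in_spanningTwoForest_le_two
    {V E : Type*} [Fintype V] [Fintype E] (G : Multigraph V E)
    (hconn : G.ConnectedOn Set.univ)
    {n : ℕ} (e : Fin (n + 1) → E) (v : Fin n → V) (hchain : G.IsChain e v)
    (F : Set E) (hF : G.IsSpanningTwoForest F) :
    Set.ncard {s : E | (∃ i, e i = s) ∧ s ∉ F} ≤ 2 := by
  exact Multigraph.final_glue G e v hchain F hF
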